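/- Let f : ℝ^d → ℝ be nonnegative and integrable with ∫ f = 1, let Λⁿ be packing sets for f at level 1 with a common separation constant, converging weakly to Λ, and let K ⊆ ℝ^d be compact. If ∫_K ∑_{λ∈Λⁿ} f(x−λ) dx → |K| as n → ∞, then ∫_K ∑_{λ∈Λ} f(x−λ) dx = |K| and ∑_{λ∈Λ} f(x−λ) = 1 for almost every x ∈ K. -/

import Mathlib

open MeasureTheory Filter Pointwise

noncomputable section

/-- The closed cube `[-R/2, R/2]^d`. -/
def cube (d : ℕ) (R : ℝ) : Set (Fin d → ℝ) := {y | ∀ i, |y i| ≤ R / 2}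

/-- The open cube `(-ε/2, ε/2)^d`. -/
def ocube (d : ℕ) (ε : ℝ) : Set (Fin d → ℝ) := {y | ∀ i, |y i| < ε / 2}

/-- `f + Λ` is a packing at level 1: `∑_{λ ∈ Λ} f(x - λ) ≤ 1` a.e. -/
def IsPacking {d : ℕ} (f : (Fin d → ℝ) → ℝ) (Λ : Set (Fin d → ℝ)) : Prop :=
  ∀ᵐ x : Fin d → ℝ, (∑' l : Λ, f (x - (l : Fin d → ℝ))) ≤ 1

/-- `Λ` is uniformly discrete with separation constant `δ`: distinct points are at
distance greater than `δ`. -/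
def Separated {d : ℕ} (δ : ℝ) (Λ : Set (Fin d → ℝ)) : Prop :=
  ∀ a ∈ Λ, ∀ b ∈ Λ, a ≠ b → δ < dist a b

/-- Weak convergence of the sets `Λⁿ` to `Λ`: for every `ε, R > 0`, eventually
`Λⁿ ∩ Q_R ⊆ Λ + Q_ε` and `Λ ∩ Q_R ⊆ Λⁿ + Q_ε`. -/
def WeakConv {d : ℕ} (Λn : ℕ → Set (Fin d → ℝ)) (Λ : Set (Fin d → ℝ)) : Prop :=
  ∀ ε > (0 : ℝ), ∀ R > (0 : ℝ), ∃ N : ℕ, ∀ n ≥ N,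
    Λn n ∩ cube d R ⊆ Λ + ocube d ε ∧ Λ ∩ cube d R ⊆ Λn n + ocube d ε

/-- The upper density of `Λ` is at least `c`: for every `ε > 0` there are arbitrarily
large `R` and a cube of side `R` containing at least `(c - ε) R^d` points of `Λ`. -/
def UpperDensGE {d : ℕ} (Λ : Set (Fin d → ℝ)) (c : ℝ) : Prop :=
  ∀ ε > (0 : ℝ), ∀ R₀ : ℝ, ∃ R > R₀, ∃ x : Fin d → ℝ,
    (((Λ ∩ {y | ∀ i, |y i - x i| ≤ R / 2}).ncard : ℝ)) ≥ (c - ε) * R ^ d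

namespace TilingAux

open Metric Set ENNReal

variable {d : ℕ}

/-- indicator with value 1 -/
abbrev indic (A : Set (Fin d → ℝ)) (x : Fin d → ℝ) : ℝ≥0∞ :=
  A.indicator (fun _ => (1:ℝ≥0∞)) x

lemma setLintegral_eq_indic {A : Set (Fin d → ℝ)} (hA : MeasurableSet A)
    (h : (Fin d → ℝ) → ℝ≥0∞) :
    ∫⁻ x in A, h x = ∫⁻ x, indic A x * h x := by
  rw [← lintegral_indicator hA]
  congr 1
  funext x
  by_cases hx : x ∈ A <;> simp [indic, hx]

lemma card_bound {δ : ℝ} (hδ : 0 < δ) {S : Set (Fin d → ℝ)} (hS : Separated δ S)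
    {c : Fin d → ℝ} {r : ℝ} (t : Finset (Fin d → ℝ))
    (ht : ↑t ⊆ S ∩ Metric.closedBall c r) :
    (t.card : ℝ≥0∞) * ENNReal.ofReal (δ ^ d) ≤ ENNReal.ofReal ((2*(r+δ)) ^ d) := by
  rcases t.eq_empty_or_nonempty with rfl | ⟨a, ha⟩
  · simp
  have hr : 0 ≤ r := dist_nonneg.trans (ht ha).2
  have hδ2 : (0:ℝ) < δ/2 := by linarith
  have hdisj : (↑t : Set (Fin d → ℝ)).PairwiseDisjoint (fun l => Metric.ball l (δ/2)) := by
    intro x hx y hy hxy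
    refine Metric.ball_disjoint_ball ?_
    have := hS x (ht hx).1 y (ht hy).1 hxy
    linarith
  have hU : volume (⋃ l ∈ t, Metric.ball l (δ/2)) = ∑ l ∈ t, volume (Metric.ball l (δ/2)) :=
    measure_biUnion_finset hdisj (fun l _ => measurableSet_ball)
  have hvol : ∀ l : Fin d → ℝ, volume (Metric.ball l (δ/2)) = ENNReal.ofReal (δ^d) := by
    intro l
    rw [Real.volume_pi_ball _ hδ2, Fintype.card_fin, show (2*(δ/2)) = δ by ring]
  have hsub : (⋃ l ∈ t, Metric.ball l (δ/2)) ⊆ Metric.ball c (r+δ) := by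
    intro y hy
    simp only [Set.mem_iUnion] at hy
    obtain ⟨l, hl, hyl⟩ := hy
    have h1 : dist y l < δ/2 := hyl
    have h2 : dist l c ≤ r := (ht hl).2
    have := dist_triangle y l c
    exact mem_ball.2 (by linarith)
  calc (t.card : ℝ≥0∞) * ENNReal.ofReal (δ^d)
      = ∑ l ∈ t, volume (Metric.ball l (δ/2)) := by
        simp [hvol, Finset.sum_const, nsmul_eq_mul]
    _ = volume (⋃ l ∈ t, Metric.ball l (δ/2)) := hU.symm
    _ ≤ volume (Metric.ball c (r+δ)) := measure_mono hsub
    _ ≤ ENNReal.ofReal ((2*(r+δ))^d) := by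
        rw [Real.volume_pi_ball _ (by linarith : (0:ℝ) < r + δ), Fintype.card_fin]

lemma sep_finite {δ : ℝ} (hδ : 0 < δ) {S : Set (Fin d → ℝ)} (hS : Separated δ S)
    (c : Fin d → ℝ) (r : ℝ) : (S ∩ Metric.closedBall c r).Finite := by
  by_contra h
  rw [← Set.not_infinite, not_not] at h
  have hpos : (0:ℝ≥0∞) < ENNReal.ofReal (δ^d) := ENNReal.ofReal_pos.2 (pow_pos hδ d)
  obtain ⟨n, hn⟩ := ENNReal.exists_nat_gt
    (show ENNReal.ofReal ((2*(r+δ))^d) / ENNReal.ofReal (δ^d) ≠ ∞ from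
      (ENNReal.div_lt_top ENNReal.ofReal_ne_top hpos.ne').ne)
  obtain ⟨t, hts, htc⟩ := h.exists_subset_card_eq (n+1)
  have hcb := card_bound hδ hS t hts
  rw [htc] at hcb
  have h1 : ENNReal.ofReal ((2*(r+δ))^d) < n * ENNReal.ofReal (δ^d) := by
    rwa [ENNReal.div_lt_iff (Or.inl hpos.ne') (Or.inl ENNReal.ofReal_ne_top)] at hn
  have h2 : (n : ℝ≥0∞) * ENNReal.ofReal (δ^d) ≤ (↑(n+1) : ℝ≥0∞) * ENNReal.ofReal (δ^d) := by
    gcongr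
    exact_mod_cast Nat.le_succ n
  exact absurd (h2.trans hcb) (not_le.2 h1)

lemma sep_countable {δ : ℝ} (hδ : 0 < δ) {S : Set (Fin d → ℝ)} (hS : Separated δ S) :
    S.Countable := by
  have hsub : S ⊆ ⋃ n : ℕ, S ∩ Metric.closedBall 0 n := by
    intro x hx
    obtain ⟨n, hn⟩ := exists_nat_ge (dist x 0)
    exact Set.mem_iUnion.2 ⟨n, hx, Metric.mem_closedBall.2 hn⟩
  have h2 : (⋃ n : ℕ, S ∩ Metric.closedBall 0 (n:ℝ)).Countable :=
    Set.countable_iUnion (fun n => (sep_finite hδ hS 0 n).countable)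
  exact h2.mono hsub


lemma lintegral_shift (g : (Fin d → ℝ) → ℝ≥0∞) {A A' : Set (Fin d → ℝ)} (v w : Fin d → ℝ)
    (h : ∀ x ∈ A, x - v + w ∈ A') :
    ∫⁻ x, indic A x * g (x - v) ≤ ∫⁻ x, indic A' x * g (x - w) := by
  have key := lintegral_add_right_eq_self (μ := volume)
    (f := fun x => indic A x * g (x - v)) (v - w)
  rw [← key]
  apply lintegral_mono
  intro y
  show indic A (y + (v - w)) * g (y + (v - w) - v) ≤ indic A' y * g (y - w)
  have hyy : y + (v - w) - v = y - w := by abel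
  rw [hyy]
  by_cases hy : y + (v - w) ∈ A
  · have hy' : y ∈ A' := by
      have := h _ hy
      have he : y + (v - w) - v + w = y := by abel
      rwa [he] at this
    simp [indic, hy, hy']
  · simp [indic, hy]

lemma tsum_lintegral_le {δ : ℝ} (hδ : 0 < δ) {S : Set (Fin d → ℝ)} (hS : Separated δ S)
    (g : (Fin d → ℝ) → ℝ≥0∞) (hg : Measurable g)
    {A B : Set (Fin d → ℝ)} (hA : MeasurableSet A) {c : Fin d → ℝ} {r : ℝ}
    (hAr : A ⊆ Metric.closedBall c r)
    (hB : ∀ l ∈ S, ∀ y : Fin d → ℝ, y + l ∈ A → y ∈ B) :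
    ∑' l : S, ∫⁻ x in A, g (x - (l : Fin d → ℝ)) ≤
      (ENNReal.ofReal ((2*(r+δ))^d) / ENNReal.ofReal (δ^d)) * ∫⁻ y, indic B y * g y := by
  haveI := (sep_countable hδ hS).to_subtype
  set Nb := ENNReal.ofReal ((2*(r+δ))^d) / ENNReal.ofReal (δ^d) with hNb
  have step1 : ∀ l : S, ∫⁻ x in A, g (x - (l:Fin d → ℝ)) =
      ∫⁻ y, indic A (y + l) * g y := by
    intro l
    rw [setLintegral_eq_indic hA]
    have key := lintegral_add_right_eq_self (μ := volume)
      (f := fun x => indic A x * g (x - (l:Fin d → ℝ))) (l:Fin d → ℝ)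
    rw [← key]
    congr 1
    funext y
    rw [add_sub_cancel_right]
  have hmeas : ∀ l : S, Measurable (fun y => indic A (y + (l:Fin d → ℝ)) * g y) := by
    intro l
    exact ((measurable_one.indicator hA).comp (measurable_add_const _)).mul hg
  calc ∑' l : S, ∫⁻ x in A, g (x - (l:Fin d → ℝ))
      = ∑' l : S, ∫⁻ y, indic A (y + (l:Fin d → ℝ)) * g y := tsum_congr step1
    _ = ∫⁻ y, ∑' l : S, indic A (y + (l:Fin d → ℝ)) * g y :=
        (lintegral_tsum (fun l => (hmeas l).aemeasurable)).symm
    _ ≤ ∫⁻ y, Nb * (indic B y * g y) := by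
        apply lintegral_mono
        intro y
        show (∑' l : S, indic A (y + (l:Fin d → ℝ)) * g y) ≤ Nb * (indic B y * g y)
        rw [ENNReal.tsum_mul_right]
        by_cases hyB : y ∈ B
        · have hW : (∑' l : S, indic A (y + (l:Fin d → ℝ))) ≤ Nb := by
            rw [ENNReal.tsum_eq_iSup_sum]
            apply iSup_le
            intro s
            classical
            have hsum : ∑ l ∈ s, indic A (y + (l:Fin d → ℝ)) =
                ((s.filter (fun l : S => y + (l:Fin d → ℝ) ∈ A)).card : ℝ≥0∞) := by
              rw [Finset.card_filter]
              push_cast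
              apply Finset.sum_congr rfl
              intro l _
              by_cases hl : y + (l:Fin d → ℝ) ∈ A <;> simp [indic, hl]
            rw [hsum]
            set u := (s.filter (fun l : S => y + (l:Fin d → ℝ) ∈ A)).image
              (Subtype.val : S → Fin d → ℝ) with hu
            have hcard : u.card = (s.filter (fun l : S => y + (l:Fin d → ℝ) ∈ A)).card :=
              Finset.card_image_of_injective _ Subtype.val_injective
            have husub : ↑u ⊆ S ∩ Metric.closedBall (c - y) r := by
              intro z hz
              simp only [hu, Finset.coe_image, Set.mem_image] at hz
              obtain ⟨l, hl, rfl⟩ := hz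
              have hlA : y + (l:Fin d → ℝ) ∈ A := (Finset.mem_filter.1 hl).2
              refine ⟨l.2, ?_⟩
              have : dist (y + (l:Fin d → ℝ)) c ≤ r := hAr hlA
              rw [Metric.mem_closedBall]
              calc dist (l:Fin d → ℝ) (c - y) = dist (y + (l:Fin d → ℝ)) c := by
                    rw [dist_eq_norm, dist_eq_norm]
                    congr 1
                    abel
                _ ≤ r := this
            have hbd := card_bound hδ hS u husub
            rw [hcard] at hbd
            rw [hNb, ENNReal.le_div_iff_mul_le
              (Or.inl (ENNReal.ofReal_pos.2 (pow_pos hδ d)).ne')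
              (Or.inl ENNReal.ofReal_ne_top)]
            exact hbd
          calc (∑' l : S, indic A (y + (l:Fin d → ℝ))) * g y
              ≤ Nb * g y := by gcongr
            _ = Nb * (indic B y * g y) := by simp [indic, hyB]
        · have hW : (∑' l : S, indic A (y + (l:Fin d → ℝ))) = 0 := by
            rw [ENNReal.tsum_eq_zero]
            intro l
            have : y + (l:Fin d → ℝ) ∉ A := fun hc => hyB (hB _ l.2 _ hc)
            simp [indic, this]
          rw [hW, zero_mul]
          exact zero_le
    _ = Nb * ∫⁻ y, indic B y * g y := by
        rw [lintegral_const_mul' _ _ (by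
          exact (ENNReal.div_lt_top ENNReal.ofReal_ne_top
            (ENNReal.ofReal_pos.2 (pow_pos hδ d)).ne').ne)]


lemma finset_sum_le_tsum_subtype {S : Set (Fin d → ℝ)} (u : Finset (Fin d → ℝ))
    (hu : ↑u ⊆ S) (F : (Fin d → ℝ) → ℝ≥0∞) :
    ∑ a ∈ u, F a ≤ ∑' l : S, F (l : Fin d → ℝ) := by
  rw [tsum_subtype]
  calc ∑ a ∈ u, F a = ∑ a ∈ u, S.indicator F a :=
        Finset.sum_congr rfl fun a ha => (Set.indicator_of_mem (hu ha) F).symm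
    _ ≤ ∑' x, S.indicator F x := ENNReal.sum_le_tsum u

lemma ae_finite {δ : ℝ} (hδ : 0 < δ) {S : Set (Fin d → ℝ)} (hS : Separated δ S)
    (g : (Fin d → ℝ) → ℝ≥0∞) (hg : Measurable g) (hgint : ∫⁻ x, g x ≠ ∞) :
    ∀ᵐ x : Fin d → ℝ, (∑' l : S, g (x - (l : Fin d → ℝ))) ≠ ∞ := by
  haveI := (sep_countable hδ hS).to_subtype
  have hmeas : ∀ l : S, Measurable (fun x : Fin d → ℝ => g (x - (l : Fin d → ℝ))) :=
    fun l => hg.comp (measurable_id.sub measurable_const)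
  have hGmeas : Measurable (fun x => ∑' l : S, g (x - (l : Fin d → ℝ))) :=
    Measurable.ennreal_tsum hmeas
  have hball : ∀ m : ℕ, volume ({x : Fin d → ℝ |
      ¬ (∑' l : S, g (x - (l : Fin d → ℝ))) ≠ ∞} ∩ Metric.closedBall 0 m) = 0 := by
    intro m
    have hI : ∫⁻ x in Metric.closedBall (0 : Fin d → ℝ) m,
        (∑' l : S, g (x - (l : Fin d → ℝ))) ≠ ∞ := by
      rw [lintegral_tsum (fun l => (hmeas l).aemeasurable)]
      have := tsum_lintegral_le hδ hS g hg (measurableSet_closedBall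
        (x := (0 : Fin d → ℝ)) (ε := (m:ℝ)))
        (Set.Subset.refl _) (B := Set.univ) (fun _ _ _ _ => Set.mem_univ _)
      refine (lt_of_le_of_lt this ?_).ne
      have huniv : ∫⁻ y, indic Set.univ y * g y = ∫⁻ y, g y := by
        congr 1; funext y; simp [indic]
      rw [huniv]
      exact ENNReal.mul_lt_top
        (ENNReal.div_lt_top ENNReal.ofReal_ne_top
          (ENNReal.ofReal_pos.2 (pow_pos hδ d)).ne') hgint.lt_top
    have hae := ae_lt_top' (hGmeas.aemeasurable.restrict) hI
    rw [ae_iff] at hae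
    rw [Measure.restrict_apply' measurableSet_closedBall] at hae
    convert hae using 3
    ext x
    simp [lt_top_iff_ne_top]
  have hcover : {x : Fin d → ℝ | ¬ (∑' l : S, g (x - (l : Fin d → ℝ))) ≠ ∞} =
      ⋃ m : ℕ, {x : Fin d → ℝ | ¬ (∑' l : S, g (x - (l : Fin d → ℝ))) ≠ ∞} ∩
        Metric.closedBall 0 m := by
    ext x
    simp only [Set.mem_iUnion, Set.mem_inter_iff, Set.mem_setOf_eq]
    constructor
    · intro hx
      obtain ⟨m, hm⟩ := exists_nat_ge (dist x 0)
      exact ⟨m, hx, Metric.mem_closedBall.2 hm⟩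
    · rintro ⟨m, hm, -⟩; exact hm
  rw [ae_iff]
  rw [hcover]
  exact measure_iUnion_null (fun m => hball m)


lemma limit_le_one {δ : ℝ} (hδ : 0 < δ) {Λn : ℕ → Set (Fin d → ℝ)} {Λ : Set (Fin d → ℝ)}
    (hsepn : ∀ n, Separated δ (Λn n)) (hsep : Separated δ Λ) (hconv : WeakConv Λn Λ)
    (g : (Fin d → ℝ) → ℝ≥0∞) (hg : Measurable g)
    (hGn : ∀ n, ∀ᵐ x : Fin d → ℝ, (∑' l : Λn n, g (x - (l:Fin d → ℝ))) ≤ 1) :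
    ∀ᵐ x : Fin d → ℝ, (∑' l : Λ, g (x - (l:Fin d → ℝ))) ≤ 1 := by
  haveI := (sep_countable hδ hsep).to_subtype
  have hmeasl : ∀ v : Fin d → ℝ, Measurable (fun x : Fin d → ℝ => g (x - v)) :=
    fun v => hg.comp (measurable_id.sub measurable_const)
  have A1 : ∀ (t : Finset (Fin d → ℝ)), ↑t ⊆ Λ → ∀ (c : Fin d → ℝ) (r : ℝ), 0 ≤ r →
      (∑ v ∈ t, ∫⁻ x in Metric.closedBall c r, g (x - v)) ≤ ENNReal.ofReal ((2*r)^d) := by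
    intro t htΛ c r hr
    have claim : ∀ ε : ℝ, 0 < ε → ε ≤ δ →
        (∑ v ∈ t, ∫⁻ x in Metric.closedBall c r, g (x - v)) ≤
          ENNReal.ofReal ((2*(r+ε))^d) := by
      intro ε hε hεδ
      set M : ℕ := t.sup (fun l => ⌈‖l‖⌉₊) with hM
      set R : ℝ := 2*(M:ℝ)+1 with hR
      have hRpos : (0:ℝ) < R := by positivity
      have htcube : ∀ v ∈ t, v ∈ cube d R := by
        intro v hv i
        have h1 : |v i| ≤ ‖v‖ := by
          rw [← Real.norm_eq_abs]; exact norm_le_pi_norm v i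
        have h2 : ‖v‖ ≤ (⌈‖v‖⌉₊ : ℝ) := Nat.le_ceil _
        have h3 : ((⌈‖v‖⌉₊ : ℕ) : ℝ) ≤ (M:ℝ) := by
          exact_mod_cast Finset.le_sup (f := fun l => ⌈‖l‖⌉₊) hv
        have : |v i| ≤ (M:ℝ) := by linarith
        rw [hR]; linarith
      obtain ⟨N, hN⟩ := hconv ε hε R hRpos
      have h2 := (hN N le_rfl).2
      have hch : ∀ v ∈ t, ∃ a, a ∈ Λn N ∧ dist a v ≤ ε/2 := by
        intro v hv
        have hvm : v ∈ Λ ∩ cube d R := ⟨htΛ hv, htcube v hv⟩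
        obtain ⟨a, ha, w, hw, hav⟩ := Set.mem_add.1 (h2 hvm)
        refine ⟨a, ha, ?_⟩
        have hw' : v - a = w := by rw [← hav]; abel
        rw [dist_comm, dist_eq_norm, hw']
        rw [pi_norm_le_iff_of_nonneg (by linarith)]
        intro i; rw [Real.norm_eq_abs]; exact (hw i).le
      classical
      choose! φ hφ1 hφ2 using hch
      have hinj : ∀ x ∈ t, ∀ y ∈ t, φ x = φ y → x = y := by
        intro x hx y hy hxy
        by_contra hne
        have hd := hsep x (htΛ hx) y (htΛ hy) hne
        have hdd : dist x y ≤ ε := by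
          calc dist x y ≤ dist x (φ x) + dist (φ x) y := dist_triangle _ _ _
            _ = dist (φ x) x + dist (φ y) y := by rw [dist_comm, hxy, dist_comm (φ y) y]
            _ ≤ ε/2 + ε/2 := add_le_add (hφ2 x hx) (hφ2 y hy)
            _ = ε := by ring
        linarith
      have hterm : ∀ v ∈ t, ∫⁻ x in Metric.closedBall c r, g (x - v) ≤
          ∫⁻ x in Metric.closedBall c (r+ε), g (x - φ v) := by
        intro v hv
        rw [setLintegral_eq_indic measurableSet_closedBall,
            setLintegral_eq_indic measurableSet_closedBall]
        apply lintegral_shift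
        intro x hx
        rw [Metric.mem_closedBall] at hx ⊢
        have hxx : dist (x - v + φ v) x = dist (φ v) v := by
          rw [dist_eq_norm, dist_eq_norm]; congr 1; abel
        calc dist (x - v + φ v) c ≤ dist (x - v + φ v) x + dist x c := dist_triangle _ _ _
          _ ≤ ε/2 + r := by rw [hxx]; exact add_le_add (hφ2 v hv) hx
          _ ≤ r + ε := by linarith
      haveI := (sep_countable hδ (hsepn N)).to_subtype
      calc ∑ v ∈ t, ∫⁻ x in Metric.closedBall c r, g (x-v)
          ≤ ∑ v ∈ t, ∫⁻ x in Metric.closedBall c (r+ε), g (x - φ v) :=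
            Finset.sum_le_sum hterm
        _ = ∑ a ∈ t.image φ, ∫⁻ x in Metric.closedBall c (r+ε), g (x - a) :=
            (Finset.sum_image (f := fun a => ∫⁻ x in Metric.closedBall c (r+ε), g (x - a))
              hinj).symm
        _ ≤ ∑' l : Λn N, ∫⁻ x in Metric.closedBall c (r+ε), g (x - (l:Fin d → ℝ)) := by
            apply finset_sum_le_tsum_subtype
            intro a ha
            simp only [Finset.coe_image, Set.mem_image, Finset.mem_coe] at ha
            obtain ⟨v, hv, rfl⟩ := ha
            exact hφ1 v hv
        _ = ∫⁻ x in Metric.closedBall c (r+ε), ∑' l : Λn N, g (x - (l:Fin d → ℝ)) :=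
            (lintegral_tsum fun l => (hmeasl _).aemeasurable).symm
        _ ≤ ∫⁻ _ in Metric.closedBall c (r+ε), (1:ℝ≥0∞) :=
            lintegral_mono_ae (ae_restrict_of_ae (hGn N))
        _ = volume (Metric.closedBall c (r+ε)) := setLIntegral_one _
        _ = ENNReal.ofReal ((2*(r+ε))^d) := by
            rw [Real.volume_pi_closedBall _ (by linarith : (0:ℝ) ≤ r + ε), Fintype.card_fin]
    have htend : Tendsto (fun ε : ℝ => ENNReal.ofReal ((2*(r+ε))^d))
        (nhdsWithin 0 (Set.Ioi 0)) (nhds (ENNReal.ofReal ((2*r)^d))) := by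
      apply Tendsto.mono_left ?_ nhdsWithin_le_nhds
      have hcont : Continuous (fun ε : ℝ => ENNReal.ofReal ((2*(r+ε))^d)) :=
        ENNReal.continuous_ofReal.comp
          ((continuous_const.mul (continuous_const.add continuous_id)).pow d)
      have := hcont.tendsto 0
      simpa using this
    refine ge_of_tendsto htend ?_
    filter_upwards [Ioc_mem_nhdsGT_of_mem (Set.left_mem_Ico.2 hδ)] with ε hε
    exact claim ε hε.1 hε.2
  have A2 : ∀ (c : Fin d → ℝ) (r : ℝ), 0 ≤ r →
      ∫⁻ x in Metric.closedBall c r, (∑' l : Λ, g (x - (l:Fin d → ℝ))) ≤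
        ENNReal.ofReal ((2*r)^d) := by
    intro c r hr
    rw [lintegral_tsum fun l => (hmeasl _).aemeasurable]
    rw [ENNReal.tsum_eq_iSup_sum]
    apply iSup_le
    intro s
    calc ∑ l ∈ s, ∫⁻ x in Metric.closedBall c r, g (x - (l:Fin d → ℝ))
        = ∑ a ∈ s.image Subtype.val, ∫⁻ x in Metric.closedBall c r, g (x - a) := by
          rw [Finset.sum_image (f := fun a => ∫⁻ x in Metric.closedBall c r, g (x - a))
            (fun x _ y _ h => Subtype.val_injective h)]
      _ ≤ ENNReal.ofReal ((2*r)^d) := by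
          apply A1 _ _ c r hr
          intro a ha
          simp only [Finset.coe_image, Set.mem_image, Finset.mem_coe] at ha
          obtain ⟨l, _, rfl⟩ := ha
          exact l.2
  set G : (Fin d → ℝ) → ℝ≥0∞ := fun x => ∑' l : Λ, g (x - (l:Fin d → ℝ)) with hGdef
  have hGmeas : Measurable G := Measurable.ennreal_tsum (fun l => hmeasl _)
  set ρ : Measure (Fin d → ℝ) := volume.withDensity G with hρ
  have hcb : ∀ (x : Fin d → ℝ) (r : ℝ), 0 ≤ r →
      ρ (Metric.closedBall x r) ≤ ENNReal.ofReal ((2*r)^d) := by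
    intro x r hr
    rw [hρ, withDensity_apply _ measurableSet_closedBall]
    exact A2 x r hr
  haveI : IsLocallyFiniteMeasure ρ := ⟨fun x => ⟨Metric.closedBall x 1,
    Metric.closedBall_mem_nhds x one_pos,
    lt_of_le_of_lt (hcb x 1 one_pos.le) ENNReal.ofReal_lt_top⟩⟩
  have h1 := Besicovitch.ae_tendsto_rnDeriv ρ volume
  have h2 := Measure.rnDeriv_withDensity (volume : Measure (Fin d → ℝ)) hGmeas
  filter_upwards [h1, h2] with x hx1 hx2
  show G x ≤ 1
  rw [← hx2]
  apply le_of_tendsto hx1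
  filter_upwards [self_mem_nhdsWithin] with r hr
  have hr0 : (0:ℝ) < r := hr
  have hle : ρ (Metric.closedBall x r) ≤ volume (Metric.closedBall x r) := by
    rw [Real.volume_pi_closedBall _ hr0.le, Fintype.card_fin]
    exact hcb x r hr0.le
  exact ENNReal.div_le_of_le_mul (by rwa [one_mul])


lemma tsum_set_split (S C : Set (Fin d → ℝ)) (F : (Fin d → ℝ) → ℝ≥0∞) :
    ∑' l : S, F (l : Fin d → ℝ) =
      (∑' l : ↥(S ∩ C), F (l : Fin d → ℝ)) + ∑' l : ↥(S \ C), F (l : Fin d → ℝ) := by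
  rw [tsum_subtype, tsum_subtype, tsum_subtype, ← ENNReal.tsum_add]
  apply tsum_congr
  intro x
  by_cases hS : x ∈ S
  · by_cases hC : x ∈ C
    · simp [Set.indicator_of_mem, hS, hC, Set.indicator_of_notMem, Set.mem_diff]
    · simp [Set.indicator_of_mem, hS, hC, Set.indicator_of_notMem, Set.mem_diff]
  · simp [Set.indicator_of_notMem, hS, fun h : x ∈ S ∩ C => hS h.1, Set.mem_diff]

end TilingAux

open ENNReal Metric

theorem tiling_on_compact_of_weak_limit {d : ℕ} (f : (Fin d → ℝ) → ℝ)
    (hf0 : ∀ x, 0 ≤ f x) (hfi : Integrable f) (hint : ∫ x, f x = 1)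
    (Λn : ℕ → Set (Fin d → ℝ)) (Λ : Set (Fin d → ℝ)) (δ : ℝ) (hδ : 0 < δ)
    (hsepn : ∀ n, Separated δ (Λn n)) (hsep : Separated δ Λ)
    (hpack : ∀ n, IsPacking f (Λn n)) (hconv : WeakConv Λn Λ)
    (K : Set (Fin d → ℝ)) (hK : IsCompact K)
    (hlim : Tendsto (fun n : ℕ => ∫ x in K, ∑' l : Λn n, f (x - (l : Fin d → ℝ)))
      atTop (nhds (volume K).toReal)) :
    (∫ x in K, ∑' l : Λ, f (x - (l : Fin d → ℝ))) = (volume K).toReal ∧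
      ∀ᵐ x ∂(volume.restrict K), (∑' l : Λ, f (x - (l : Fin d → ℝ))) = 1 := by
  classical
  have hsm := hfi.aestronglyMeasurable.stronglyMeasurable_mk
  have hff' := hfi.aestronglyMeasurable.ae_eq_mk
  set f' := hfi.aestronglyMeasurable.mk f with hf'
  set g : (Fin d → ℝ) → ℝ≥0∞ := fun x => ENNReal.ofReal (f' x) with hg_def
  have hg : Measurable g := ENNReal.measurable_ofReal.comp hsm.measurable
  have hgf : (fun x : Fin d → ℝ => ENNReal.ofReal (f x)) =ᵐ[volume] g :=
    hff'.mono fun x hx => by rw [hg_def]; simp [hx]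
  have hgint : ∫⁻ x, g x = 1 := by
    rw [← lintegral_congr_ae hgf, ← ofReal_integral_eq_lintegral_ofReal hfi
      (Filter.Eventually.of_forall hf0), hint, ENNReal.ofReal_one]
  have hgint_ne : ∫⁻ x, g x ≠ ∞ := by rw [hgint]; exact ENNReal.one_ne_top
  have hagree : ∀ (S : Set (Fin d → ℝ)), S.Countable →
      ∀ᵐ x : Fin d → ℝ, ∀ l : S,
        ENNReal.ofReal (f (x - (l : Fin d → ℝ))) = g (x - (l:Fin d → ℝ)) := by
    intro S hSc
    haveI := hSc.to_subtype
    rw [ae_all_iff]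
    intro l
    have hmp : MeasurePreserving (fun x : Fin d → ℝ => x - (l:Fin d → ℝ)) volume volume :=
      measurePreserving_sub_right volume _
    have h := ae_eq_comp (μ := volume) hmp.measurable.aemeasurable
      (g := fun x => ENNReal.ofReal (f x)) (g' := g) (by rwa [hmp.map_eq])
    exact h
  have hconvreal : ∀ (S : Set (Fin d → ℝ)), S.Countable →
      ∀ᵐ x : Fin d → ℝ, ((∑' l : S, g (x - (l:Fin d → ℝ))) ≠ ∞ →
        (∑' l : S, f (x - (l : Fin d → ℝ))) = (∑' l : S, g (x - (l:Fin d → ℝ))).toReal) := by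
    intro S hSc
    haveI := hSc.to_subtype
    filter_upwards [hagree S hSc] with x hx hfin
    have h1 : ∀ l : S, f (x - (l:Fin d → ℝ)) = (g (x - (l:Fin d → ℝ))).toReal := fun l => by
      rw [← hx l, ENNReal.toReal_ofReal (hf0 _)]
    rw [tsum_congr h1, ENNReal.tsum_toReal_eq fun l => by
      rw [← hx l]; exact ENNReal.ofReal_ne_top]
  have hcnt : ∀ n, (Λn n).Countable := fun n => TilingAux.sep_countable hδ (hsepn n)
  have hcntΛ : Λ.Countable := TilingAux.sep_countable hδ hsep
  haveI := hcntΛ.to_subtype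
  have hGn_le : ∀ n, ∀ᵐ x : Fin d → ℝ, (∑' l : Λn n, g (x - (l:Fin d → ℝ))) ≤ 1 := by
    intro n
    filter_upwards [hpack n, TilingAux.ae_finite hδ (hsepn n) g hg hgint_ne,
      hconvreal (Λn n) (hcnt n)] with x h1 h2 h3
    rw [← ENNReal.ofReal_one, ENNReal.le_ofReal_iff_toReal_le h2 zero_le_one, ← h3 h2]
    exact h1
  have hGle : ∀ᵐ x : Fin d → ℝ, (∑' l : Λ, g (x - (l:Fin d → ℝ))) ≤ 1 :=
    TilingAux.limit_le_one hδ hsepn hsep hconv g hg hGn_le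
  have hmeasl : ∀ v : Fin d → ℝ, Measurable (fun x : Fin d → ℝ => g (x - v)) :=
    fun v => hg.comp (measurable_id.sub measurable_const)
  have hGmeas : ∀ S : Set (Fin d → ℝ), S.Countable →
      Measurable (fun x => ∑' l : S, g (x - (l:Fin d → ℝ))) := by
    intro S hSc; haveI := hSc.to_subtype; exact Measurable.ennreal_tsum fun l => hmeasl _
  have hKm : MeasurableSet K := hK.isClosed.measurableSet
  have hKvol : volume K ≠ ∞ := hK.measure_lt_top.ne
  have hsetle : ∀ (A : Set (Fin d → ℝ)) (S : Set (Fin d → ℝ)),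
      (∀ᵐ x : Fin d → ℝ, (∑' l : S, g (x - (l:Fin d→ℝ))) ≤ 1) →
      ∫⁻ x in A, (∑' l : S, g (x - (l:Fin d → ℝ))) ≤ volume A := by
    intro A S hS
    calc ∫⁻ x in A, (∑' l : S, g (x - (l:Fin d → ℝ)))
        ≤ ∫⁻ _ in A, (1:ℝ≥0∞) := lintegral_mono_ae (ae_restrict_of_ae hS)
      _ = volume A := setLIntegral_one _
  have hint_eq : ∀ n, ∫ x in K, (∑' l : Λn n, f (x - (l:Fin d → ℝ))) =
      (∫⁻ x in K, ∑' l : Λn n, g (x - (l:Fin d → ℝ))).toReal := by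
    intro n
    haveI := (hcnt n).to_subtype
    have hae : (fun x => ∑' l : Λn n, f (x - (l:Fin d → ℝ)))
        =ᵐ[volume.restrict K] fun x => (∑' l : Λn n, g (x - (l:Fin d → ℝ))).toReal := by
      apply ae_restrict_of_ae
      filter_upwards [TilingAux.ae_finite hδ (hsepn n) g hg hgint_ne,
        hconvreal _ (hcnt n)] with x h1 h2
      exact h2 h1
    rw [integral_congr_ae hae]
    exact integral_toReal ((hGmeas _ (hcnt n)).aemeasurable.restrict)
      (ae_restrict_of_ae ((TilingAux.ae_finite hδ (hsepn n) g hg hgint_ne).mono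
        fun x h => lt_top_iff_ne_top.2 h))
  have hlim2 : Tendsto (fun n => (∫⁻ x in K, ∑' l : Λn n, g (x - (l:Fin d → ℝ))).toReal)
      atTop (nhds (volume K).toReal) := Filter.Tendsto.congr hint_eq hlim
  have hlime : Tendsto (fun n => ∫⁻ x in K, ∑' l : Λn n, g (x - (l:Fin d → ℝ)))
      atTop (nhds (volume K)) := by
    have hne : ∀ n, (∫⁻ x in K, ∑' l : Λn n, g (x - (l:Fin d → ℝ))) ≠ ∞ :=
      fun n => (lt_of_le_of_lt (hsetle K _ (hGn_le n)) (lt_top_iff_ne_top.2 hKvol)).ne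
    have h1 := ENNReal.tendsto_ofReal hlim2
    rw [ENNReal.ofReal_toReal hKvol] at h1
    refine h1.congr fun n => ?_
    rw [ENNReal.ofReal_toReal (hne n)]
  -- geometric setup for the lower bound
  obtain ⟨r₀, hr₀⟩ := hK.isBounded.subset_closedBall 0
  set rK : ℝ := max r₀ 0 with hrKdef
  have hrK : K ⊆ Metric.closedBall 0 rK :=
    hr₀.trans (Metric.closedBall_subset_closedBall (le_max_left _ _))
  have hrK0 : 0 ≤ rK := le_max_right _ _
  set NK : ℝ≥0∞ := ENNReal.ofReal ((2*(rK+δ))^d) / ENNReal.ofReal (δ^d) with hNKdef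
  have hNK_ne : NK ≠ ∞ :=
    (ENNReal.div_lt_top ENNReal.ofReal_ne_top (ENNReal.ofReal_pos.2 (pow_pos hδ d)).ne').ne
  have hlow : volume K ≤ ∫⁻ x in K, (∑' l : Λ, g (x - (l:Fin d → ℝ))) := by
    refine ENNReal.le_of_forall_pos_le_add fun ε' hε' hfin => ?_
    set η : ℝ≥0∞ := (ε' : ℝ≥0∞)/3 with hηdef
    have hη0 : η ≠ 0 := by
      rw [hηdef]
      simp only [ne_eq, ENNReal.div_eq_zero_iff]
      push_neg
      exact ⟨by exact_mod_cast hε'.ne', by norm_num⟩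
    set ν : Measure (Fin d → ℝ) := volume.withDensity g with hνdef
    haveI : IsFiniteMeasure ν := isFiniteMeasure_withDensity hgint_ne
    have htail : ∃ m₀ : ℕ, 1 ≤ m₀ ∧
        NK * ν ((Metric.closedBall (0:Fin d → ℝ) (m₀:ℝ))ᶜ) < η := by
      have hInter : (⋂ m : ℕ, (Metric.closedBall (0:Fin d → ℝ) (m:ℝ))ᶜ) = ∅ := by
        ext x
        simp only [Set.mem_iInter, Set.mem_compl_iff, Metric.mem_closedBall,
          Set.mem_empty_iff_false, iff_false, not_forall, not_not]
        obtain ⟨m, hm⟩ := exists_nat_ge (dist x 0)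
        exact ⟨m, hm⟩
      have hmono : Antitone (fun m : ℕ => (Metric.closedBall (0:Fin d → ℝ) (m:ℝ))ᶜ) := by
        intro a b hab
        exact Set.compl_subset_compl.2
          (Metric.closedBall_subset_closedBall (by exact_mod_cast hab))
      have h1 : Tendsto (fun m : ℕ => ν ((Metric.closedBall (0:Fin d → ℝ) (m:ℝ))ᶜ))
          atTop (nhds 0) := by
        have := tendsto_measure_iInter_atTop (μ := ν)
          (fun m => measurableSet_closedBall.compl.nullMeasurableSet) hmono
          ⟨0, measure_ne_top ν _⟩
        rwa [hInter, measure_empty] at this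
      have h2 : Tendsto (fun m : ℕ => NK * ν ((Metric.closedBall (0:Fin d → ℝ) (m:ℝ))ᶜ))
          atTop (nhds 0) := by
        have := ENNReal.Tendsto.const_mul h1 (Or.inr hNK_ne)
        rwa [mul_zero] at this
      exact ((eventually_ge_atTop 1).and
        (h2.eventually_lt_const (lt_of_le_of_ne zero_le (Ne.symm hη0)))).exists
    obtain ⟨m₀, hm₀1, hm₀⟩ := htail
    set R : ℝ := 2*((m₀:ℝ) + rK) with hRdef
    have hRpos : 0 < R := by
      have h1 : (1:ℝ) ≤ (m₀:ℝ) := by exact_mod_cast hm₀1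
      rw [hRdef]; linarith
    set sK : ℕ → Set (Fin d → ℝ) := fun m => K + Metric.closedBall 0 (1/((m:ℝ)+1)) with hsKdef
    have hsKcomp : ∀ m, IsCompact (sK m) := fun m => hK.add (isCompact_closedBall _ _)
    have hsKsub : ∀ m, K ⊆ sK m := by
      intro m x hx
      have hx0 : x = x + 0 := (add_zero x).symm
      rw [hx0]
      exact Set.add_mem_add hx (Metric.mem_closedBall_self (by positivity))
    have hsKanti : Antitone sK := by
      intro a b hab
      apply Set.add_subset_add_left
      apply Metric.closedBall_subset_closedBall
      apply one_div_le_one_div_of_le (by positivity)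
      have : (a:ℝ) ≤ (b:ℝ) := by exact_mod_cast hab
      linarith
    have hsKInter : (⋂ m : ℕ, sK m) = K := by
      apply Set.Subset.antisymm
      · intro x hx
        rw [← hK.isClosed.closure_eq]
        rw [Metric.mem_closure_iff]
        intro ε hε
        obtain ⟨m, hm⟩ := exists_nat_one_div_lt hε
        have hxm := Set.mem_iInter.1 hx m
        obtain ⟨k, hk, b, hb, hkb⟩ := Set.mem_add.1 hxm
        refine ⟨k, hk, ?_⟩
        have hxkb : x - k = b := by rw [← hkb]; abel
        rw [dist_eq_norm, hxkb]
        calc ‖b‖ ≤ 1/((m:ℝ)+1) := by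
              rw [← dist_zero_right]
              exact Metric.mem_closedBall.1 hb
          _ < ε := hm
      · intro x hx; exact Set.mem_iInter.2 fun m => hsKsub m hx
    have hKtend : Tendsto (fun m => volume (sK m)) atTop (nhds (volume K)) := by
      have := tendsto_measure_iInter_atTop (μ := volume)
        (fun m => ((hsKcomp m).isClosed.measurableSet).nullMeasurableSet) hsKanti
        ⟨0, ((hsKcomp 0).measure_lt_top).ne⟩
      rwa [hsKInter] at this
    have hδ1 : Tendsto (fun m : ℕ => 1/((m:ℝ)+1)) atTop (nhds 0) :=
      tendsto_one_div_add_atTop_nhds_zero_nat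
    have hev : ∀ᶠ m : ℕ in atTop, volume (sK m) < volume K + η ∧ 1/((m:ℝ)+1) ≤ δ := by
      apply Filter.Eventually.and
      · exact hKtend.eventually_lt_const (ENNReal.lt_add_right hKvol hη0)
      · exact (hδ1.eventually_lt_const hδ).mono fun m h => h.le
    obtain ⟨m₁, hm₁⟩ := hev.exists
    set ε : ℝ := 1/((m₁:ℝ)+1) with hεdef
    have hε0 : 0 < ε := by rw [hεdef]; positivity
    have hεδ : ε ≤ δ := hm₁.2
    have hKεm : MeasurableSet (sK m₁) := (hsKcomp m₁).isClosed.measurableSet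
    obtain ⟨N₀, hN₀⟩ := hconv ε hε0 R hRpos
    have hopen : {z : ℝ≥0∞ | volume K < z + η} ∈ nhds (volume K) := by
      have hcont : Continuous (fun z : ℝ≥0∞ => z + η) := continuous_id.add continuous_const
      exact (isOpen_Ioi.preimage hcont).mem_nhds
        (by simp only [Set.mem_preimage, Set.mem_Ioi]; exact ENNReal.lt_add_right hKvol hη0)
    obtain ⟨n, hnN₀, hnlt⟩ := ((eventually_ge_atTop N₀).and (hlime.eventually hopen)).exists
    haveI := (hcnt n).to_subtype
    have hsplit : (∫⁻ x in K, ∑' l : Λn n, g (x - (l:Fin d → ℝ))) =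
        (∑' l : ↥(Λn n ∩ cube d R), ∫⁻ x in K, g (x - (l:Fin d → ℝ))) +
        ∑' l : ↥(Λn n \ cube d R), ∫⁻ x in K, g (x - (l:Fin d → ℝ)) := by
      rw [lintegral_tsum fun l => (hmeasl _).aemeasurable.restrict]
      exact TilingAux.tsum_set_split (Λn n) (cube d R) (fun v => ∫⁻ x in K, g (x - v))
    have hfar : (∑' l : ↥(Λn n \ cube d R), ∫⁻ x in K, g (x - (l:Fin d → ℝ))) ≤ η := by
      have hsep' : Separated δ (Λn n \ cube d R) := fun a ha b hb hab =>
        hsepn n a ha.1 b hb.1 hab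
      have hB : ∀ l ∈ Λn n \ cube d R, ∀ y : Fin d → ℝ, y + l ∈ K →
          y ∈ (Metric.closedBall (0:Fin d → ℝ) (m₀:ℝ))ᶜ := by
        rintro l ⟨hl1, hl2⟩ y hy
        simp only [cube, Set.mem_setOf_eq, not_forall, not_le] at hl2
        obtain ⟨i, hi⟩ := hl2
        have hyK := hrK hy
        rw [Metric.mem_closedBall, dist_zero_right] at hyK
        have hyl : |y i + l i| ≤ rK := by
          have h := norm_le_pi_norm (y + l) i
          rw [Real.norm_eq_abs] at h
          simpa using h.trans hyK
        rw [Set.mem_compl_iff, Metric.mem_closedBall, dist_zero_right]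
        intro hcon
        have h5 : |y i| ≤ (m₀:ℝ) := by
          have h := norm_le_pi_norm y i
          rw [Real.norm_eq_abs] at h
          exact h.trans hcon
        have h6 : |l i| ≤ |y i + l i| + |y i| := by
          have h := abs_add_le (y i + l i) (-(y i))
          simpa using h
        rw [hRdef] at hi
        have : |l i| ≤ rK + (m₀:ℝ) := by linarith
        linarith
      have happ := TilingAux.tsum_lintegral_le hδ hsep' g hg hKm hrK hB
      refine happ.trans ?_
      have hBint : ∫⁻ y, TilingAux.indic ((Metric.closedBall (0:Fin d → ℝ) (m₀:ℝ))ᶜ) y * g y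
          = ν ((Metric.closedBall (0:Fin d → ℝ) (m₀:ℝ))ᶜ) := by
        rw [← TilingAux.setLintegral_eq_indic measurableSet_closedBall.compl g,
          hνdef, withDensity_apply g measurableSet_closedBall.compl]
      rw [hBint, ← hNKdef]
      exact hm₀.le
    have hnear : (∑' l : ↥(Λn n ∩ cube d R), ∫⁻ x in K, g (x - (l:Fin d → ℝ))) ≤
        ∫⁻ x in sK m₁, (∑' l : Λ, g (x - (l:Fin d → ℝ))) := by
      have h1 := (hN₀ n hnN₀).1
      have hch : ∀ l : ↥(Λn n ∩ cube d R), ∃ a, a ∈ Λ ∧ dist a (l:Fin d → ℝ) ≤ ε/2 := by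
        intro l
        obtain ⟨a, ha, w, hw, hav⟩ := Set.mem_add.1 (h1 l.2)
        refine ⟨a, ha, ?_⟩
        have hw' : (l:Fin d → ℝ) - a = w := by rw [← hav]; abel
        rw [dist_comm, dist_eq_norm, hw', pi_norm_le_iff_of_nonneg (by linarith)]
        intro i; rw [Real.norm_eq_abs]; exact (hw i).le
      choose φ hφ1 hφ2 using hch
      have hinj : Function.Injective
          (fun l : ↥(Λn n ∩ cube d R) => (⟨φ l, hφ1 l⟩ : ↥Λ)) := by
        intro l1 l2 h12
        have hval : φ l1 = φ l2 := congrArg Subtype.val h12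
        by_contra hne
        have hvne : (l1:Fin d → ℝ) ≠ (l2:Fin d → ℝ) := fun hc => hne (Subtype.ext hc)
        have hd := hsepn n _ l1.2.1 _ l2.2.1 hvne
        have hdd : dist (l1:Fin d → ℝ) (l2:Fin d → ℝ) ≤ ε := by
          calc dist (l1:Fin d → ℝ) (l2:Fin d → ℝ)
              ≤ dist (l1:Fin d → ℝ) (φ l1) + dist (φ l1) (l2:Fin d → ℝ) := dist_triangle _ _ _
            _ = dist (φ l1) (l1:Fin d → ℝ) + dist (φ l2) (l2:Fin d → ℝ) := by
                rw [dist_comm, hval]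
            _ ≤ ε/2 + ε/2 := add_le_add (hφ2 l1) (hφ2 l2)
            _ = ε := by ring
        linarith
      calc (∑' l : ↥(Λn n ∩ cube d R), ∫⁻ x in K, g (x - (l:Fin d → ℝ)))
          ≤ ∑' l : ↥(Λn n ∩ cube d R), ∫⁻ x in sK m₁, g (x - φ l) := by
            apply ENNReal.tsum_le_tsum
            intro l
            rw [TilingAux.setLintegral_eq_indic hKm, TilingAux.setLintegral_eq_indic hKεm]
            apply TilingAux.lintegral_shift
            intro x hx
            have hxx : x - (l:Fin d → ℝ) + φ l = x + (φ l - (l:Fin d → ℝ)) := by abel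
            rw [hxx, hsKdef]
            apply Set.add_mem_add hx
            rw [Metric.mem_closedBall, dist_zero_right, ← hεdef]
            have h := hφ2 l
            rw [dist_eq_norm] at h
            calc ‖φ l - (l:Fin d → ℝ)‖ ≤ ε/2 := h
              _ ≤ ε := by linarith
        _ ≤ ∑' m : ↥Λ, ∫⁻ x in sK m₁, g (x - (m:Fin d → ℝ)) :=
            ENNReal.tsum_comp_le_tsum_of_injective hinj
              (fun m : ↥Λ => ∫⁻ x in sK m₁, g (x - (m:Fin d → ℝ)))
        _ = ∫⁻ x in sK m₁, (∑' l : Λ, g (x - (l:Fin d → ℝ))) :=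
            (lintegral_tsum fun m => (hmeasl _).aemeasurable.restrict).symm
    have hKεsplit : ∫⁻ x in sK m₁, (∑' l : Λ, g (x - (l:Fin d → ℝ))) ≤
        (∫⁻ x in K, (∑' l : Λ, g (x - (l:Fin d → ℝ)))) + η := by
      have hdecomp : sK m₁ = K ∪ (sK m₁ \ K) := (Set.union_diff_cancel (hsKsub m₁)).symm
      rw [hdecomp, lintegral_union (hKεm.diff hKm) disjoint_sdiff_self_right]
      apply add_le_add_right
      calc ∫⁻ x in sK m₁ \ K, (∑' l : Λ, g (x - (l:Fin d → ℝ)))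
          ≤ volume (sK m₁ \ K) := hsetle _ _ hGle
        _ = volume (sK m₁) - volume K :=
            measure_diff (hsKsub m₁) hKm.nullMeasurableSet hKvol
        _ ≤ η := by
            rw [tsub_le_iff_right, add_comm]
            exact hm₁.1.le
    have hηsum : η + η + η ≤ (ε' : ℝ≥0∞) := by
      rw [hηdef]
      have h3 : (ε':ℝ≥0∞)/3 + (ε':ℝ≥0∞)/3 + (ε':ℝ≥0∞)/3 = (ε':ℝ≥0∞)/3 * 3 := by ring
      rw [h3, ENNReal.div_mul_cancel (by norm_num) (by norm_num)]
    have hchain : volume K ≤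
        (∫⁻ x in K, (∑' l : Λ, g (x - (l:Fin d → ℝ)))) + (η + η + η) := by
      have e1 : (∫⁻ x in K, ∑' l : Λn n, g (x - (l:Fin d → ℝ))) ≤
          (∫⁻ x in sK m₁, (∑' l : Λ, g (x - (l:Fin d → ℝ)))) + η := by
        rw [hsplit]
        exact add_le_add hnear hfar
      have e2 := hKεsplit
      have e3 : volume K <
          (((∫⁻ x in K, (∑' l : Λ, g (x - (l:Fin d → ℝ)))) + η) + η) + η :=
        lt_of_lt_of_le hnlt (by
          apply add_le_add_left
          exact e1.trans (add_le_add_left e2 η))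
      have e4 : (((∫⁻ x in K, (∑' l : Λ, g (x - (l:Fin d → ℝ)))) + η) + η) + η =
          (∫⁻ x in K, (∑' l : Λ, g (x - (l:Fin d → ℝ)))) + (η + η + η) := by ring
      rw [e4] at e3
      exact e3.le
    exact hchain.trans (add_le_add_right hηsum _)
  have hup : ∫⁻ x in K, (∑' l : Λ, g (x - (l:Fin d → ℝ))) ≤ volume K := hsetle K Λ hGle
  have heq : ∫⁻ x in K, (∑' l : Λ, g (x - (l:Fin d → ℝ))) = volume K := le_antisymm hup hlow
  have hfinK : (∫⁻ x in K, (∑' l : Λ, g (x - (l:Fin d → ℝ)))) ≠ ∞ := by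
    rw [heq]; exact hKvol
  have hsub : ∫⁻ x in K, ((1:ℝ≥0∞) - (∑' l : Λ, g (x - (l:Fin d → ℝ)))) = 0 := by
    rw [lintegral_sub' ((hGmeas Λ hcntΛ).aemeasurable.restrict) hfinK
      (ae_restrict_of_ae hGle), setLIntegral_one, heq, tsub_self]
  have hzero : (fun x => (1:ℝ≥0∞) - (∑' l : Λ, g (x - (l:Fin d → ℝ))))
      =ᵐ[volume.restrict K] 0 :=
    (lintegral_eq_zero_iff' (aemeasurable_const.sub
      ((hGmeas Λ hcntΛ).aemeasurable.restrict))).1 hsub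
  have hone : (fun x => (∑' l : Λ, g (x - (l:Fin d → ℝ))))
      =ᵐ[volume.restrict K] fun _ => 1 := by
    filter_upwards [hzero, ae_restrict_of_ae hGle] with x h1 h2
    have hge : (1:ℝ≥0∞) ≤ ∑' l : Λ, g (x - (l:Fin d → ℝ)) := by
      have h1' : (1:ℝ≥0∞) - (∑' l : Λ, g (x - (l:Fin d → ℝ))) = 0 := h1
      exact tsub_eq_zero_iff_le.1 h1'
    exact le_antisymm h2 hge
  have hreal1 : ∀ᵐ x ∂(volume.restrict K), (∑' l : Λ, f (x - (l : Fin d → ℝ))) = 1 := by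
    filter_upwards [hone, ae_restrict_of_ae (hconvreal Λ hcntΛ)] with x h1 h2
    have hfinx : (∑' l : Λ, g (x - (l:Fin d → ℝ))) ≠ ∞ := by
      rw [h1]; exact ENNReal.one_ne_top
    rw [h2 hfinx, h1, ENNReal.toReal_one]
  refine ⟨?_, hreal1⟩
  have hcongr : ∫ x in K, (∑' l : Λ, f (x - (l : Fin d → ℝ))) = ∫ _x in K, (1:ℝ) :=
    integral_congr_ae (hreal1.mono fun x hx => by simpa using hx)
  rw [hcongr, setIntegral_const, smul_eq_mul, mul_one, measureReal_def]
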